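/- Let r > 0, let κ be an infinite cardinal, and let (M,d,p) be a complete richly branching pointed ℝ-tree of radius r such that M has at least κ branches at every point a with d(p,a) < r. Let K be a nonempty finitely spanned ℝ-tree with a designated point q. Let e ∈ M satisfy r − d(p,e) ≥ sup{d(q,x) : x ∈ K}, and let {β_i : i < α} be a collection of branches at e with α < κ. Then there exists an isometric embedding f : K → M such that f(q) = e and the image f(K) is disjoint from β_i for every i < α. -/

import Mathlib

open Set Metric

/-- A geodesic segment in a metric space: the image of an isometric embedding of a
closed real interval `[0, ℓ]`, going from `a` to `b`. -/
def IsGeodesicSegmentFromTo {M : Type*} [MetricSpace M] (s : Set M) (a b : M) : Prop :=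
  ∃ ℓ : ℝ, 0 ≤ ℓ ∧ ∃ γ : ℝ → M,
    (∀ u ∈ Set.Icc (0:ℝ) ℓ, ∀ v ∈ Set.Icc (0:ℝ) ℓ, dist (γ u) (γ v) = |u - v|) ∧
    γ 0 = a ∧ γ ℓ = b ∧ s = γ '' Set.Icc 0 ℓ

/-- An arc from `a` to `b`: the (injective, continuous) image of a closed real
interval `[0, ℓ]`; a single point when `a = b`. -/
def IsArcFromTo {M : Type*} [MetricSpace M] (s : Set M) (a b : M) : Prop :=
  ∃ ℓ : ℝ, 0 ≤ ℓ ∧ ∃ γ : ℝ → M,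
    ContinuousOn γ (Set.Icc 0 ℓ) ∧ Set.InjOn γ (Set.Icc 0 ℓ) ∧
    γ 0 = a ∧ γ ℓ = b ∧ s = γ '' Set.Icc 0 ℓ

/-- An ℝ-tree: a metric space in which any two points are joined by a unique arc,
and that arc is a geodesic segment. -/
def IsRTree (M : Type*) [MetricSpace M] : Prop :=
  ∀ a b : M, ∃ s : Set M,
    IsArcFromTo s a b ∧ IsGeodesicSegmentFromTo s a b ∧
    ∀ t : Set M, IsArcFromTo t a b → t = s

/-- The geodesic segment `[a, b]` in an ℝ-tree: the unique arc from `a` to `b`. -/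
noncomputable def seg {M : Type*} [MetricSpace M] (h : IsRTree M) (a b : M) : Set M :=
  (h a b).choose

/-- The branches at `a`: the connected components of `M ∖ {a}`. -/
def Branches {M : Type*} [MetricSpace M] (a : M) : Set (Set M) :=
  {β : Set M | ∃ x : M, x ≠ a ∧ β = connectedComponentIn (({a} : Set M)ᶜ) x}

/-- The branch `β` at `b` has height at least `h`:
`sup {d(b,x) : x ∈ β} ≥ h`, i.e. `β` contains points at distance arbitrarily
close to (at least) `h` from `b`. -/
def HeightGE {M : Type*} [MetricSpace M] (b : M) (β : Set M) (h : ℝ) : Prop :=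
  ∀ h' : ℝ, h' < h → ∃ x ∈ β, h' < dist b x

/-- There are at least 3 branches at `b` of height ≥ `h`. -/
def ThreeBranchesGE {M : Type*} [MetricSpace M] (b : M) (h : ℝ) : Prop :=
  ∃ β₁ β₂ β₃ : Set M, β₁ ∈ Branches b ∧ β₂ ∈ Branches b ∧ β₃ ∈ Branches b ∧
    β₁ ≠ β₂ ∧ β₁ ≠ β₃ ∧ β₂ ≠ β₃ ∧
    HeightGE b β₁ h ∧ HeightGE b β₂ h ∧ HeightGE b β₃ h

/-- A pointed ℝ-tree of radius ≤ `r` is richly branching if the set of points `b`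
having at least 3 branches of height ≥ `r − d(p,b)` is dense. -/
def RichlyBranchingAt {M : Type*} [MetricSpace M] (p : M) (r : ℝ) : Prop :=
  Dense {b : M | ThreeBranchesGE b (r - dist p b)}

/-- The branching condition for radius `r`: for every `x` and every `ε > 0` there
are `y₁, y₂, y₃` with `|d(x,yᵢ) − (r − d(p,x))| ≤ ε` and
`d(x,yᵢ) + d(x,yⱼ) − d(yᵢ,yⱼ) ≤ ε` for `i < j`. -/
def BranchingCondition {M : Type*} [MetricSpace M] (p : M) (r : ℝ) : Prop :=
  ∀ x : M, ∀ ε : ℝ, 0 < ε → ∃ y₁ y₂ y₃ : M,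
    |dist x y₁ - (r - dist p x)| ≤ ε ∧
    |dist x y₂ - (r - dist p x)| ≤ ε ∧
    |dist x y₃ - (r - dist p x)| ≤ ε ∧
    dist x y₁ + dist x y₂ - dist y₁ y₂ ≤ ε ∧
    dist x y₁ + dist x y₃ - dist y₁ y₃ ≤ ε ∧
    dist x y₂ + dist x y₃ - dist y₂ y₃ ≤ ε

universe u

/-- `B` spans the ℝ-tree `M` if `M` is the union of the segments with endpoints in `B`. -/
def Spans {M : Type*} [MetricSpace M] (h : IsRTree M) (B : Set M) : Prop :=
  ∀ x : M, ∃ b₁ ∈ B, ∃ b₂ ∈ B, x ∈ seg h b₁ b₂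

section RTreeBasics

variable {X : Type*} [MetricSpace X] (h : IsRTree X)

/-- A globally continuous geodesic parametrization of `seg h a b`. -/
theorem exists_param (a b : X) : ∃ γ : ℝ → X, Continuous γ ∧
    (∀ u ∈ Set.Icc (0:ℝ) (dist a b), ∀ v ∈ Set.Icc (0:ℝ) (dist a b),
      dist (γ u) (γ v) = |u - v|) ∧
    γ 0 = a ∧ γ (dist a b) = b ∧ seg h a b = γ '' Set.Icc 0 (dist a b) := by
  obtain ⟨ℓ, hℓ0, γ, hiso, hγ0, hγℓ, hs⟩ := (h a b).choose_spec.2.1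
  have hlen : ℓ = dist a b := by
    have h2 := hiso 0 ⟨le_refl _, hℓ0⟩ ℓ ⟨hℓ0, le_refl _⟩
    rw [hγ0, hγℓ] at h2
    rw [h2, abs_sub_comm, sub_zero, abs_of_nonneg hℓ0]
  subst hlen
  set c : ℝ → ℝ := fun t => max 0 (min t (dist a b)) with hc
  have hcmem : ∀ t, c t ∈ Set.Icc (0:ℝ) (dist a b) := fun t =>
    ⟨le_max_left _ _, max_le hℓ0 (min_le_right _ _)⟩
  have hcid : ∀ t ∈ Set.Icc (0:ℝ) (dist a b), c t = t := by
    intro t ht; simp only [hc]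
    rw [min_eq_left ht.2, max_eq_right ht.1]
  have hγcont : ContinuousOn γ (Set.Icc 0 (dist a b)) := by
    apply LipschitzOnWith.continuousOn (K := 1)
    intro u hu v hv
    rw [edist_dist, hiso u hu v hv]
    simp [edist_dist, Real.dist_eq]
  refine ⟨γ ∘ c, ?_, ?_, ?_, ?_, ?_⟩
  · exact hγcont.comp_continuous
      (continuous_const.max (continuous_id.min continuous_const)) hcmem
  · intro u hu v hv
    simp only [Function.comp_apply, hcid u hu, hcid v hv]
    exact hiso u hu v hv
  · simp only [Function.comp_apply, hcid 0 ⟨le_refl _, hℓ0⟩, hγ0]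
  · simp only [Function.comp_apply, hcid (dist a b) ⟨hℓ0, le_refl _⟩, hγℓ]
  · show (h a b).choose = _
    rw [hs]
    symm
    apply Set.image_congr
    intro t ht; rw [Function.comp_apply, hcid t ht]

theorem arc_eq_seg {s : Set X} {a b : X} (hs : IsArcFromTo s a b) :
    s = seg h a b :=
  (h a b).choose_spec.2.2 s hs

theorem mem_seg_left (a b : X) : a ∈ seg h a b := by
  obtain ⟨γ, -, -, hγ0, -, hs⟩ := exists_param h a b
  rw [hs]; exact ⟨0, ⟨le_refl _, dist_nonneg⟩, hγ0⟩

theorem mem_seg_right (a b : X) : b ∈ seg h a b := by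
  obtain ⟨γ, -, -, -, hγℓ, hs⟩ := exists_param h a b
  rw [hs]; exact ⟨dist a b, ⟨dist_nonneg, le_refl _⟩, hγℓ⟩

theorem dist_add_of_mem_seg {a b z : X} (hz : z ∈ seg h a b) :
    dist a z + dist z b = dist a b := by
  obtain ⟨γ, -, hiso, hγ0, hγℓ, hs⟩ := exists_param h a b
  rw [hs] at hz
  obtain ⟨t, ht, rfl⟩ := hz
  have h1 := hiso 0 ⟨le_refl _, dist_nonneg⟩ t ht
  have h2 := hiso t ht (dist a b) ⟨dist_nonneg, le_refl _⟩
  rw [hγ0] at h1; rw [hγℓ] at h2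
  rw [h1, h2, abs_of_nonpos (by linarith [ht.1]), abs_of_nonpos (by linarith [ht.2])]
  ring

theorem seg_self (a : X) : seg h a a = {a} := by
  obtain ⟨γ, -, -, hγ0, -, hs⟩ := exists_param h a a
  rw [hs, dist_self]
  rw [Set.Icc_self, Set.image_singleton, hγ0]

end RTreeBasics
section RTreeGlue

variable {X : Type*} [MetricSpace X] (h : IsRTree X)

theorem isConnected_seg (a b : X) : IsConnected (seg h a b) := by
  obtain ⟨γ, hγc, -, -, -, hs⟩ := exists_param h a b
  rw [hs]
  exact (isConnected_Icc dist_nonneg).image γ hγc.continuousOn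

theorem isCompact_seg (a b : X) : IsCompact (seg h a b) := by
  obtain ⟨γ, hγc, -, -, -, hs⟩ := exists_param h a b
  rw [hs]
  exact (isCompact_Icc).image hγc

theorem seg_comm (a b : X) : seg h a b = seg h b a := by
  apply arc_eq_seg
  obtain ⟨γ, hγc, hiso, hγ0, hγℓ, hs⟩ := exists_param h a b
  refine ⟨dist a b, dist_nonneg, fun t => γ (dist a b - t), ?_, ?_, ?_, ?_, ?_⟩
  · exact (hγc.comp (continuous_const.sub continuous_id)).continuousOn
  · intro u hu v hv heq2
    have h1 : dist a b - u ∈ Set.Icc (0:ℝ) (dist a b) := ⟨by linarith [hu.2], by linarith [hu.1]⟩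
    have h2 : dist a b - v ∈ Set.Icc (0:ℝ) (dist a b) := ⟨by linarith [hv.2], by linarith [hv.1]⟩
    have heq3 : γ (dist a b - u) = γ (dist a b - v) := heq2
    have := hiso _ h1 _ h2
    rw [heq3, dist_self] at this
    have : |dist a b - u - (dist a b - v)| = 0 := this.symm
    rw [abs_eq_zero] at this
    linarith
  · show γ (dist a b - 0) = b
    rw [sub_zero, hγℓ]
  · show γ (dist a b - dist a b) = a
    rw [sub_self, hγ0]
  · rw [hs]
    ext x
    constructor
    · rintro ⟨t, ht, rfl⟩
      exact ⟨dist a b - t, ⟨by linarith [ht.2], by linarith [ht.1]⟩, by ring_nf⟩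
    · rintro ⟨t, ht, rfl⟩
      exact ⟨dist a b - t, ⟨by linarith [ht.2], by linarith [ht.1]⟩, rfl⟩

/-- Restriction of a parametrized geodesic is the segment between its endpoints. -/
theorem subseg_param {a b : X} {γ : ℝ → X} (hγc : Continuous γ)
    (hiso : ∀ u ∈ Set.Icc (0:ℝ) (dist a b), ∀ v ∈ Set.Icc (0:ℝ) (dist a b),
      dist (γ u) (γ v) = |u - v|)
    {c₁ c₂ : ℝ} (hc₁ : 0 ≤ c₁) (hcc : c₁ ≤ c₂) (hc₂ : c₂ ≤ dist a b) :
    γ '' Set.Icc c₁ c₂ = seg h (γ c₁) (γ c₂) := by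
  apply arc_eq_seg
  have hsub : ∀ t, t ∈ Set.Icc (0:ℝ) (c₂ - c₁) → c₁ + t ∈ Set.Icc (0:ℝ) (dist a b) :=
    fun t ht => ⟨by linarith [ht.1], by linarith [ht.2]⟩
  refine ⟨c₂ - c₁, by linarith, fun t => γ (c₁ + t), ?_, ?_, ?_, ?_, ?_⟩
  · exact (hγc.comp (continuous_const.add continuous_id)).continuousOn
  · intro u hu v hv heq2
    have heq3 : γ (c₁ + u) = γ (c₁ + v) := heq2
    have := hiso _ (hsub u hu) _ (hsub v hv)
    rw [heq3, dist_self] at this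
    have : |c₁ + u - (c₁ + v)| = 0 := this.symm
    rw [abs_eq_zero] at this; linarith
  · show γ (c₁ + 0) = γ c₁
    rw [add_zero]
  · show γ (c₁ + (c₂ - c₁)) = γ c₂
    ring_nf
  · ext x
    constructor
    · rintro ⟨t, ht, rfl⟩
      exact ⟨t - c₁, ⟨by linarith [ht.1], by linarith [ht.2]⟩, by ring_nf⟩
    · rintro ⟨t, ht, rfl⟩
      exact ⟨c₁ + t, ⟨by linarith [ht.1], by linarith [ht.2]⟩, rfl⟩

/-- Concatenation of two segments meeting only at `z` is the segment from end to end. -/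
theorem seg_union_of_inter {a z b : X}
    (hdisj : ∀ x, x ∈ seg h a z → x ∈ seg h z b → x = z) :
    seg h a b = seg h a z ∪ seg h z b ∧ dist a b = dist a z + dist z b := by
  obtain ⟨γ₁, hc₁, hi₁, h10, h1ℓ, hs₁⟩ := exists_param h a z
  obtain ⟨γ₂, hc₂, hi₂, h20, h2ℓ, hs₂⟩ := exists_param h z b
  set ℓ₁ := dist a z
  set ℓ₂ := dist z b
  have hℓ₁ : (0:ℝ) ≤ ℓ₁ := dist_nonneg
  have hℓ₂ : (0:ℝ) ≤ ℓ₂ := dist_nonneg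
  set θ : ℝ → X := fun t => if t ≤ ℓ₁ then γ₁ t else γ₂ (t - ℓ₁) with hθ
  have hθc : Continuous θ := by
    apply Continuous.if_le hc₁ (hc₂.comp (continuous_id.sub continuous_const))
      continuous_id continuous_const
    intro t ht
    subst ht
    simp [h1ℓ, h20]
    rw [show ℓ₁ - dist a z = 0 from sub_self _, h20]
  have hmem₁ : ∀ t ∈ Set.Icc (0:ℝ) (ℓ₁ + ℓ₂), t ≤ ℓ₁ → θ t = γ₁ t := by
    intro t ht h'; simp [hθ, h']
  have hmem₂ : ∀ t ∈ Set.Icc (0:ℝ) (ℓ₁ + ℓ₂), ℓ₁ ≤ t → θ t = γ₂ (t - ℓ₁) := by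
    intro t ht h'
    rcases eq_or_lt_of_le h' with h''|h''
    · simp [hθ, ← h'', h1ℓ, h20]
    · simp [hθ, not_le.2 h'']
  have harc : IsArcFromTo (seg h a z ∪ seg h z b) a b := by
    refine ⟨ℓ₁ + ℓ₂, by linarith, θ, hθc.continuousOn, ?_, ?_, ?_, ?_⟩
    · -- injectivity
      have key : ∀ u ∈ Set.Icc (0:ℝ) (ℓ₁+ℓ₂), ∀ v ∈ Set.Icc (0:ℝ) (ℓ₁+ℓ₂),
          u ≤ v → θ u = θ v → u = v := by
        intro u hu v hv huv heq
        by_cases hu' : u ≤ ℓ₁ <;> by_cases hv' : v ≤ ℓ₁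
        · rw [hmem₁ u hu hu', hmem₁ v hv hv'] at heq
          have := hi₁ u ⟨hu.1, hu'⟩ v ⟨hv.1, hv'⟩
          rw [heq, dist_self] at this
          have : |u - v| = 0 := this.symm
          rw [abs_eq_zero] at this; linarith
        · -- u ≤ ℓ₁ < v
          push_neg at hv'
          rw [hmem₁ u hu hu', hmem₂ v hv hv'.le] at heq
          have hx1 : γ₁ u ∈ seg h a z := by
            rw [hs₁]; exact ⟨u, ⟨hu.1, hu'⟩, rfl⟩
          have hx2 : γ₁ u ∈ seg h z b := by
            rw [heq, hs₂]; exact ⟨v - ℓ₁, ⟨by linarith, by linarith [hv.2]⟩, rfl⟩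
          have hz' := hdisj _ hx1 hx2
          -- γ₁ u = z = γ₁ ℓ₁ so u = ℓ₁; also γ₂ (v - ℓ₁) = z = γ₂ 0 so v = ℓ₁
          have e1 : u = ℓ₁ := by
            have := hi₁ u ⟨hu.1, hu'⟩ ℓ₁ ⟨hℓ₁, le_refl _⟩
            rw [h1ℓ, hz', dist_self] at this
            have : |u - ℓ₁| = 0 := this.symm
            rw [abs_eq_zero] at this; linarith
          have e2 : v = ℓ₁ := by
            have := hi₂ (v - ℓ₁) ⟨by linarith, by linarith [hv.2]⟩ 0 ⟨le_refl _, hℓ₂⟩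
            rw [h20, ← heq, hz', dist_self] at this
            have : |v - ℓ₁ - 0| = 0 := this.symm
            rw [abs_eq_zero] at this; linarith
          rw [e1, e2]
        · linarith
        · push_neg at hu'
          rw [hmem₂ u hu hu'.le, hmem₂ v hv (by linarith)] at heq
          have := hi₂ (u - ℓ₁) ⟨by linarith, by linarith [hu.2]⟩
            (v - ℓ₁) ⟨by linarith, by linarith [hv.2]⟩
          rw [heq, dist_self] at this
          have : |u - ℓ₁ - (v - ℓ₁)| = 0 := this.symm
          rw [abs_eq_zero] at this; linarith
      intro u hu v hv heq
      rcases le_total u v with huv|huv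
      · exact key u hu v hv huv heq
      · exact (key v hv u hu huv heq.symm).symm
    · rw [hmem₁ 0 ⟨le_refl _, by linarith⟩ hℓ₁, h10]
    · rw [hmem₂ (ℓ₁ + ℓ₂) ⟨by linarith, le_refl _⟩ (by linarith)]
      rw [show ℓ₁ + ℓ₂ - ℓ₁ = ℓ₂ by ring, h2ℓ]
    · ext x
      constructor
      · rintro hx
        rcases hx with hx | hx
        · rw [hs₁] at hx
          obtain ⟨t, ht, rfl⟩ := hx
          exact ⟨t, ⟨ht.1, by linarith [ht.2]⟩, hmem₁ t ⟨ht.1, by linarith [ht.2]⟩ ht.2⟩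
        · rw [hs₂] at hx
          obtain ⟨t, ht, rfl⟩ := hx
          refine ⟨ℓ₁ + t, ⟨by linarith [ht.1], by linarith [ht.2]⟩, ?_⟩
          rw [hmem₂ (ℓ₁ + t) ⟨by linarith [ht.1], by linarith [ht.2]⟩ (by linarith [ht.1])]
          ring_nf
      · rintro ⟨t, ht, rfl⟩
        by_cases ht' : t ≤ ℓ₁
        · left; rw [hmem₁ t ht ht', hs₁]; exact ⟨t, ⟨ht.1, ht'⟩, rfl⟩
        · right; push_neg at ht'
          rw [hmem₂ t ht ht'.le, hs₂]
          exact ⟨t - ℓ₁, ⟨by linarith, by linarith [ht.2]⟩, rfl⟩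
  have heq := arc_eq_seg h harc
  constructor
  · exact heq.symm
  · -- z ∈ seg a b, so distances add
    have hz : z ∈ seg h a b := by
      rw [← heq]; left; exact mem_seg_right h a z
    have := dist_add_of_mem_seg h hz
    linarith

theorem mem_seg_of_dist_add {a b z : X} (hsum : dist a z + dist z b = dist a b) :
    z ∈ seg h a b ∧ seg h a b = seg h a z ∪ seg h z b := by
  have hdisj : ∀ x, x ∈ seg h a z → x ∈ seg h z b → x = z := by
    intro x hx1 hx2
    have e1 := dist_add_of_mem_seg h hx1
    have e2 := dist_add_of_mem_seg h hx2
    have : dist a b ≤ dist a x + dist x b := dist_triangle a x b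
    have hzx : dist x z = 0 := by
      have hxz : dist z x = dist x z := dist_comm z x
      have hnn : (0:ℝ) ≤ dist x z := dist_nonneg
      linarith
    rwa [dist_eq_zero] at hzx
  obtain ⟨hu, -⟩ := seg_union_of_inter h hdisj
  exact ⟨by rw [hu]; left; exact mem_seg_right h a z, hu⟩

theorem mem_seg_iff_dist_add {a b z : X} :
    z ∈ seg h a b ↔ dist a z + dist z b = dist a b :=
  ⟨dist_add_of_mem_seg h, fun hs => (mem_seg_of_dist_add h hs).1⟩

end RTreeGlue
section RTreeMedian

variable {X : Type*} [MetricSpace X] (h : IsRTree X)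

theorem seg_subset_left {a b z : X} (hz : z ∈ seg h a b) : seg h a z ⊆ seg h a b := by
  obtain ⟨γ, hγc, hiso, hγ0, hγℓ, hs⟩ := exists_param h a b
  rw [hs] at hz
  obtain ⟨t, ht, rfl⟩ := hz
  have := subseg_param h hγc hiso (le_refl (0:ℝ)) ht.1 ht.2
  rw [hγ0] at this
  rw [← this, hs]
  exact Set.image_mono (Set.Icc_subset_Icc (le_refl _) ht.2)

theorem seg_subset_right {a b z : X} (hz : z ∈ seg h a b) : seg h z b ⊆ seg h a b := by
  rw [seg_comm h z b, seg_comm h a b]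
  exact seg_subset_left h (by rwa [← seg_comm])

theorem exists_median (u v w : X) :
    ∃ m, m ∈ seg h u v ∧ m ∈ seg h u w ∧ m ∈ seg h v w := by
  obtain ⟨γ, hγc, hiγ, hγ0, hγℓ, hsγ⟩ := exists_param h u v
  obtain ⟨δ, hδc, hiδ, hδ0, hδℓ, hsδ⟩ := exists_param h u w
  set ℓ₁ := dist u v
  set ℓ₂ := dist u w
  have hℓ₁ : (0:ℝ) ≤ ℓ₁ := dist_nonneg
  have hℓ₂ : (0:ℝ) ≤ ℓ₂ := dist_nonneg
  set E : Set ℝ := {t | t ∈ Set.Icc 0 (min ℓ₁ ℓ₂) ∧ γ t = δ t} with hE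
  have h0E : (0:ℝ) ∈ E := ⟨⟨le_refl _, le_min hℓ₁ hℓ₂⟩, by rw [hγ0, hδ0]⟩
  have hEne : E.Nonempty := ⟨0, h0E⟩
  have hEbdd : BddAbove E := ⟨min ℓ₁ ℓ₂, fun t ht => ht.1.2⟩
  have hEclosed : IsClosed E := by
    have : E = Set.Icc 0 (min ℓ₁ ℓ₂) ∩ {t | γ t = δ t} := rfl
    rw [this]
    exact isClosed_Icc.inter (isClosed_eq hγc hδc)
  set T := sSup E with hT
  have hTE : T ∈ E := hEclosed.csSup_mem hEne hEbdd
  set m := γ T with hm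
  have hmδ : δ T = m := hTE.2.symm
  have hTmem : T ∈ Set.Icc 0 (min ℓ₁ ℓ₂) := hTE.1
  have hT1 : T ∈ Set.Icc (0:ℝ) ℓ₁ := ⟨hTmem.1, hTmem.2.trans (min_le_left _ _)⟩
  have hT2 : T ∈ Set.Icc (0:ℝ) ℓ₂ := ⟨hTmem.1, hTmem.2.trans (min_le_right _ _)⟩
  -- distances from u along the parametrizations
  have hdγ : ∀ t ∈ Set.Icc (0:ℝ) ℓ₁, dist u (γ t) = t := by
    intro t ht
    have := hiγ 0 ⟨le_refl _, hℓ₁⟩ t ht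
    rw [hγ0] at this
    rw [this, abs_of_nonpos (by linarith [ht.1])]; ring
  have hdδ : ∀ t ∈ Set.Icc (0:ℝ) ℓ₂, dist u (δ t) = t := by
    intro t ht
    have := hiδ 0 ⟨le_refl _, hℓ₂⟩ t ht
    rw [hδ0] at this
    rw [this, abs_of_nonpos (by linarith [ht.1])]; ring
  have key : ∀ t' ∈ Set.Icc T ℓ₁, ∀ s' ∈ Set.Icc T ℓ₂, γ t' = δ s' → t' = T := by
    intro t' ht' s' hs' heq
    have h1 : t' ∈ Set.Icc (0:ℝ) ℓ₁ := ⟨hTmem.1.trans ht'.1, ht'.2⟩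
    have h2 : s' ∈ Set.Icc (0:ℝ) ℓ₂ := ⟨hTmem.1.trans hs'.1, hs'.2⟩
    have e1 := hdγ t' h1
    have e2 := hdδ s' h2
    rw [heq] at e1
    have hts : t' = s' := e1.symm.trans e2
    have : t' ∈ E := ⟨⟨h1.1, le_min h1.2 (hts ▸ h2.2)⟩, hts ▸ heq⟩
    exact le_antisymm (le_csSup hEbdd this) ht'.1
  -- the two half-segments
  have hseg1 : γ '' Set.Icc T ℓ₁ = seg h m v := by
    have := subseg_param h hγc hiγ hT1.1 hT1.2 (le_refl ℓ₁)
    rw [hγℓ] at this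
    exact this
  have hseg2 : δ '' Set.Icc T ℓ₂ = seg h m w := by
    have := subseg_param h hδc hiδ hT2.1 hT2.2 (le_refl ℓ₂)
    rw [hδℓ, hmδ] at this
    exact this
  have hdisj : ∀ x, x ∈ seg h v m → x ∈ seg h m w → x = m := by
    intro x hx1 hx2
    rw [seg_comm, ← hseg1] at hx1
    rw [← hseg2] at hx2
    obtain ⟨t', ht', rfl⟩ := hx1
    obtain ⟨s', hs', heq⟩ := hx2
    rw [key t' ht' s' hs' heq.symm]
  obtain ⟨hunion, -⟩ := seg_union_of_inter h hdisj
  refine ⟨m, ?_, ?_, ?_⟩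
  · rw [hsγ]; exact ⟨T, hT1, rfl⟩
  · rw [hsδ]; exact ⟨T, hT2, hmδ⟩
  · rw [hunion]; left; exact mem_seg_right h v m
end RTreeMedian

section RTreeFork

variable {X : Type*} [MetricSpace X] (h : IsRTree X)

theorem seg_subset_union (u v w : X) :
    seg h u v ⊆ seg h u w ∪ seg h w v := by
  obtain ⟨m, h1, h2, h3⟩ := exists_median h u v w
  have hsplit := (mem_seg_of_dist_add h (dist_add_of_mem_seg h h1)).2
  rw [hsplit]
  apply Set.union_subset_union
  · exact seg_subset_left h h2
  · have : m ∈ seg h w v := by rwa [seg_comm]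
    exact seg_subset_right h this

end RTreeFork
section RTreeComponents

variable {X : Type*} [MetricSpace X]

theorem mem_comp_of_dist_lt (h : IsRTree X) {x v u : X} (hd : dist v u < dist x v) :
    u ∈ connectedComponentIn ({x}ᶜ : Set X) v := by
  have hvx : v ≠ x := by
    intro hh; rw [hh, dist_self] at hd; exact absurd hd (not_lt.2 dist_nonneg)
  have hsub : seg h v u ⊆ ({x}ᶜ : Set X) := by
    intro z hz
    have hadd := dist_add_of_mem_seg h hz
    have h1 : dist v z ≤ dist v u := by
      have : (0:ℝ) ≤ dist z u := dist_nonneg; linarith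
    intro hzx
    simp only [Set.mem_singleton_iff] at hzx
    rw [hzx, dist_comm] at h1
    linarith
  exact (isConnected_seg h v u).isPreconnected.subset_connectedComponentIn
    (mem_seg_left h v u) hsub (mem_seg_right h v u)

theorem seg_tail_mem_comp (h : IsRTree X) {a w z : X} (hz : z ∈ seg h a w) (hza : z ≠ a) (hwa : w ≠ a) :
    z ∈ connectedComponentIn ({a}ᶜ : Set X) w := by
  obtain ⟨γ, hγc, hiso, hγ0, hγℓ, hs⟩ := exists_param h a w
  set ℓ := dist a w
  have hℓpos : 0 < ℓ := dist_pos.2 (fun hh => hwa hh.symm)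
  have hdγ : ∀ t ∈ Set.Icc (0:ℝ) ℓ, dist a (γ t) = t := by
    intro t ht
    have := hiso 0 ⟨le_refl _, hℓpos.le⟩ t ht
    rw [hγ0] at this
    rw [this, abs_of_nonpos (by linarith [ht.1])]; ring
  have hS : IsPreconnected (γ '' Set.Ioc (0:ℝ) ℓ) := by
    exact (isPreconnected_Ioc).image γ (hγc.continuousOn)
  have hsub : γ '' Set.Ioc (0:ℝ) ℓ ⊆ ({a}ᶜ : Set X) := by
    rintro _ ⟨t, ht, rfl⟩ hmem
    simp only [Set.mem_singleton_iff] at hmem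
    have := hdγ t ⟨ht.1.le, ht.2⟩
    rw [hmem, dist_self] at this
    exact absurd this.symm (ne_of_gt ht.1)
  have hwmem : w ∈ γ '' Set.Ioc (0:ℝ) ℓ := ⟨ℓ, ⟨hℓpos, le_refl _⟩, hγℓ⟩
  have hzmem : z ∈ γ '' Set.Ioc (0:ℝ) ℓ := by
    rw [hs] at hz
    obtain ⟨t, ht, rfl⟩ := hz
    refine ⟨t, ⟨?_, ht.2⟩, rfl⟩
    rcases eq_or_lt_of_le ht.1 with hh|hh
    · exfalso; apply hza; rw [← hh, hγ0]
    · exact hh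
  exact hS.subset_connectedComponentIn hwmem hsub hzmem

theorem mem_seg_of_not_mem_comp (h : IsRTree X) {x w b : X} (hx : x ≠ b) (hw : w ≠ b)
    (hcomp : w ∉ connectedComponentIn ({b}ᶜ : Set X) x) :
    b ∈ seg h x w ∧ dist x b + dist b w = dist x w := by
  have hb : b ∈ seg h x w := by
    by_contra hb
    have hsub : seg h x w ⊆ ({b}ᶜ : Set X) := by
      intro z hz hzb
      simp only [Set.mem_singleton_iff] at hzb
      exact hb (hzb ▸ hz)
    exact hcomp ((isConnected_seg h x w).isPreconnected.subset_connectedComponentIn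
      (mem_seg_left h x w) hsub (mem_seg_right h x w))
  exact ⟨hb, dist_add_of_mem_seg h hb⟩

theorem branch_eq_comp {a : X} {β : Set X} (hβ : β ∈ Branches a) {z : X} (hz : z ∈ β) :
    β = connectedComponentIn ({a}ᶜ : Set X) z := by
  obtain ⟨x₀, hx₀, rfl⟩ := hβ
  exact connectedComponentIn_eq hz

theorem branch_subset {a : X} {β : Set X} (hβ : β ∈ Branches a) : β ⊆ ({a}ᶜ : Set X) := by
  obtain ⟨x₀, hx₀, rfl⟩ := hβ
  exact connectedComponentIn_subset _ _

theorem branch_nonempty {a : X} {β : Set X} (hβ : β ∈ Branches a) : β.Nonempty := by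
  obtain ⟨x₀, hx₀, rfl⟩ := hβ
  exact ⟨x₀, mem_connectedComponentIn hx₀⟩

theorem branch_disjoint {a : X} {β₁ β₂ : Set X} (h₁ : β₁ ∈ Branches a) (h₂ : β₂ ∈ Branches a)
    (hne : β₁ ≠ β₂) : Disjoint β₁ β₂ := by
  rw [Set.disjoint_left]
  intro z hz1 hz2
  exact hne ((branch_eq_comp h₁ hz1).trans (branch_eq_comp h₂ hz2).symm)

theorem isConnected_branch_union (h : IsRTree X) {a : X} {β : Set X} (hβ : β ∈ Branches a) :
    IsPreconnected (β ∪ {a}) := by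
  obtain ⟨x₀, hx₀, rfl⟩ := hβ
  set β := connectedComponentIn ({a}ᶜ : Set X) x₀ with hb
  have hx₀' : x₀ ∈ β := mem_connectedComponentIn hx₀
  have hmemcl : a ∈ closure β := by
    rw [Metric.mem_closure_iff]
    intro ε hε
    obtain ⟨γ, hγc, hiso, hγ0, hγℓ, hs⟩ := exists_param h a x₀
    set ℓ := dist a x₀
    have hℓpos : 0 < ℓ := dist_pos.2 (fun hh => hx₀ hh.symm)
    set t := min ℓ (ε/2)
    have htpos : 0 < t := lt_min hℓpos (by linarith)
    have htle : t ≤ ℓ := min_le_left _ _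
    have hmem : γ t ∈ seg h a x₀ := by rw [hs]; exact ⟨t, ⟨htpos.le, htle⟩, rfl⟩
    have hd : dist a (γ t) = t := by
      have := hiso 0 ⟨le_refl _, hℓpos.le⟩ t ⟨htpos.le, htle⟩
      rw [hγ0] at this
      rw [this, abs_of_nonpos (by linarith)]; ring
    have hγtne : γ t ≠ a := by
      intro hh; rw [hh, dist_self] at hd; linarith
    have : γ t ∈ β := by
      rw [hb, ← connectedComponentIn_eq (mem_connectedComponentIn hx₀ : x₀ ∈ _)]
      exact seg_tail_mem_comp h hmem hγtne (fun hh => hx₀ hh)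
    exact ⟨γ t, this, by rw [hd]; exact lt_of_le_of_lt (min_le_right _ _) (by linarith)⟩
  apply IsPreconnected.subset_closure (isPreconnected_connectedComponentIn)
  · exact Set.subset_union_left
  · intro z hz
    rcases hz with hz | hz
    · exact subset_closure hz
    · simp only [Set.mem_singleton_iff] at hz
      rw [hz]; exact hmemcl

/-- A branch at `a` not containing `c ≠ a` lies in the component of `a` in `{c}ᶜ`. -/
theorem branch_subset_comp (h : IsRTree X) {a c : X} {β : Set X} (hβ : β ∈ Branches a)
    (hc : c ∉ β) (hca : c ≠ a) :
    β ⊆ connectedComponentIn ({c}ᶜ : Set X) a := by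
  have hsub : β ∪ {a} ⊆ ({c}ᶜ : Set X) := by
    intro z hz hzc
    simp only [Set.mem_singleton_iff] at hzc
    subst hzc
    rcases hz with hz | hz
    · exact hc hz
    · exact hca hz
  have := (isConnected_branch_union h hβ).subset_connectedComponentIn
    (Set.mem_union_right β rfl) hsub
  exact fun z hz => this (Set.mem_union_left _ hz)

end RTreeComponents
section Step

variable {M : Type*} [MetricSpace M]

theorem rtree_step (hM : IsRTree M) (p : M) (r : ℝ)
    (hrb : RichlyBranchingAt p r) {x v : M} (hxv : 0 < dist x v)
    {t' ε : ℝ} (hε : 0 < ε) (hlt : dist x v < t') (ht' : t' < r - dist p x) :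
    ∃ w, dist x w = t' ∧ dist v w ≤ t' - dist x v + 2*ε ∧
      w ∈ connectedComponentIn ({x}ᶜ : Set M) v := by
  set ε' := min (min ε ((t' - dist x v)/2)) (dist x v / 2) with hε'def
  have hε'pos : 0 < ε' := lt_min (lt_min hε (by linarith)) (by linarith)
  have hε'1 : ε' ≤ ε := le_trans (min_le_left _ _) (min_le_left _ _)
  have hε'2 : ε' ≤ (t' - dist x v)/2 := le_trans (min_le_left _ _) (min_le_right _ _)
  have hε'3 : ε' ≤ dist x v / 2 := min_le_right _ _
  obtain ⟨b, hb_ball, hbS⟩ := Metric.dense_iff.1 hrb v ε' hε'pos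
  have hvb : dist v b < ε' := by
    rw [dist_comm]; exact Metric.mem_ball.1 hb_ball
  have hbcomp : b ∈ connectedComponentIn ({x}ᶜ : Set M) v :=
    mem_comp_of_dist_lt hM (lt_of_lt_of_le hvb (by linarith))
  have hxb_lb : dist x v - ε' ≤ dist x b := by
    have := dist_triangle x b v
    rw [dist_comm b v] at this
    linarith
  have hxb_pos : 0 < dist x b := by linarith
  have hxb_ub : dist x b < t' := by
    have := dist_triangle x v b
    linarith
  have hxbne : x ≠ b := by
    intro hh; rw [hh, dist_self] at hxb_pos; exact absurd hxb_pos (lt_irrefl _)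
  set s := t' - dist x b with hsdef
  have hspos : 0 < s := by simp only [hsdef]; linarith
  have hslt : s < r - dist p b := by
    have := dist_triangle p x b
    simp only [hsdef]; linarith
  -- pick a tall branch at b not containing x
  obtain ⟨β₁, β₂, β₃, hβ₁, hβ₂, hβ₃, h12, h13, h23, hh₁, hh₂, hh₃⟩ := hbS
  have hpick : ∃ βt, βt ∈ Branches b ∧ HeightGE b βt (r - dist p b) ∧ x ∉ βt := by
    by_cases hx1 : x ∈ β₁
    · by_cases hx2 : x ∈ β₂
      · exact ((Set.disjoint_left.1 (branch_disjoint hβ₁ hβ₂ h12) hx1 hx2)).elim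
      · exact ⟨β₂, hβ₂, hh₂, hx2⟩
    · exact ⟨β₁, hβ₁, hh₁, hx1⟩
  obtain ⟨βt, hβt, hht, hxβt⟩ := hpick
  obtain ⟨z, hzβt, hzd⟩ := hht s hslt
  have hzbne : z ≠ b := by
    intro hh; rw [hh, dist_self] at hzd; linarith
  obtain ⟨γ, hγc, hiso, hγ0, hγℓ, hsg⟩ := exists_param hM b z
  have hsmem : s ∈ Set.Icc (0:ℝ) (dist b z) := ⟨hspos.le, hzd.le⟩
  set w := γ s with hwdef
  have hwseg : w ∈ seg hM b z := by rw [hsg]; exact ⟨s, hsmem, rfl⟩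
  have hbw : dist b w = s := by
    have := hiso 0 ⟨le_refl _, dist_nonneg⟩ s hsmem
    rw [hγ0] at this
    rw [this, abs_of_nonpos (by linarith)]; ring
  have hwbne : w ≠ b := by
    intro hh; rw [hh, dist_self] at hbw; linarith
  have hwβt : w ∈ βt := by
    have := seg_tail_mem_comp hM hwseg hwbne hzbne
    rwa [← branch_eq_comp hβt hzβt] at this
  have hwnotcomp : w ∉ connectedComponentIn ({b}ᶜ : Set M) x := by
    intro hmem
    have h1 : βt = connectedComponentIn ({b}ᶜ : Set M) w := branch_eq_comp hβt hwβt
    have h2 := connectedComponentIn_eq hmem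
    rw [h1, ← h2] at hxβt
    exact hxβt (mem_connectedComponentIn (by simpa using hxbne))
  obtain ⟨-, hadd⟩ := mem_seg_of_not_mem_comp hM hxbne hwbne hwnotcomp
  have hxw : dist x w = t' := by rw [← hadd, hbw]; simp only [hsdef]; ring
  have hwcomp : w ∈ connectedComponentIn ({x}ᶜ : Set M) v := by
    have hsub : seg hM b w ⊆ ({x}ᶜ : Set M) := by
      intro z' hz'
      by_cases hz'b : z' = b
      · subst hz'b
        simpa using (Ne.symm hxbne)
      · have := seg_tail_mem_comp hM hz' hz'b hwbne
        rw [← branch_eq_comp hβt hwβt] at this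
        intro hz'x
        simp only [Set.mem_singleton_iff] at hz'x
        exact hxβt (hz'x ▸ this)
    have hw_in_comp_b : w ∈ connectedComponentIn ({x}ᶜ : Set M) b :=
      (isConnected_seg hM b w).isPreconnected.subset_connectedComponentIn
        (mem_seg_left hM b w) hsub (mem_seg_right hM b w)
    rwa [← connectedComponentIn_eq hbcomp] at hw_in_comp_b
  refine ⟨w, hxw, ?_, hwcomp⟩
  have := dist_triangle v b w
  rw [hbw] at this
  simp only [hsdef] at this ⊢
  linarith
end Step
section Core

open Filter Topology

variable {M : Type*} [MetricSpace M] [CompleteSpace M]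

theorem rtree_core (hM : IsRTree M) (p : M) (r : ℝ)
    (hrb : RichlyBranchingAt p r) {x u : M} (hu0 : 0 < dist x u)
    {ℓ' : ℝ} (hlt : dist x u < ℓ') (hle : ℓ' ≤ r - dist p x) :
    ∃ y, dist x y = ℓ' ∧ y ∈ connectedComponentIn ({x}ᶜ : Set M) u := by
  classical
  set d₀ := dist x u with hd₀
  set t : ℕ → ℝ := fun n => ℓ' - (ℓ' - d₀) * (1/2)^n with ht
  set C : ℝ := (ℓ' - d₀)/2 + d₀/4 with hC
  have hCpos : 0 < C := by
    simp only [hC]; nlinarith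
  have hpow_pos : ∀ n : ℕ, (0:ℝ) < (1/2)^n := fun n => pow_pos (by norm_num) n
  have hpow_le : ∀ n : ℕ, ((1:ℝ)/2)^n ≤ 1 := fun n =>
    pow_le_one₀ (by norm_num) (by norm_num)
  have htlb : ∀ n, d₀ ≤ t n := by
    intro n
    simp only [ht]
    nlinarith [hpow_le n, hpow_pos n]
  have htub : ∀ n, t n < ℓ' := by
    intro n
    simp only [ht]
    nlinarith [hpow_pos n]
  have htmono : ∀ n, t n < t (n+1) := by
    intro n
    simp only [ht, pow_succ]
    nlinarith [hpow_pos n]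
  set P : ℕ → M → Prop :=
    fun n v => dist x v = t n ∧ v ∈ connectedComponentIn ({x}ᶜ : Set M) u with hP
  have hP0 : P 0 u := by
    constructor
    · simp [ht, hd₀]
    · exact mem_connectedComponentIn (by
        simp only [Set.mem_compl_iff, Set.mem_singleton_iff]
        exact (dist_pos.1 hu0).symm)
  have key : ∀ n (v : M), P n v → ∃ w, P (n+1) w ∧ dist v w ≤ C * (1/2)^n := by
    intro n v hv
    have hdv : dist x v = t n := hv.1
    have hvlt : dist x v < t (n+1) := by rw [hdv]; exact htmono n
    have hvpos : 0 < dist x v := by rw [hdv]; exact lt_of_lt_of_le hu0 (htlb n)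
    have ht' : t (n+1) < r - dist p x := lt_of_lt_of_le (htub (n+1)) hle
    obtain ⟨w, hw1, hw2, hw3⟩ := rtree_step hM p r hrb hvpos
      (show (0:ℝ) < (d₀/8) * (1/2)^n from mul_pos (by linarith) (hpow_pos n))
      hvlt ht'
    refine ⟨w, ⟨hw1, ?_⟩, ?_⟩
    · have hcv := hv.2
      rwa [← connectedComponentIn_eq hcv] at hw3
    · have hstep : t (n+1) - t n = (ℓ' - d₀) * (1/2)^(n+1) := by
        simp only [ht, pow_succ]; ring
    -- dist v w ≤ t(n+1) - dist x v + 2 * ε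
      rw [hdv] at hw2
      calc dist v w ≤ t (n+1) - t n + 2 * ((d₀/8) * (1/2)^n) := hw2
        _ = C * (1/2)^n := by rw [hstep]; simp only [hC, pow_succ]; ring
  let Y : ∀ n : ℕ, {v : M // P n v} := fun n =>
    Nat.rec ⟨u, hP0⟩
      (fun k ih => ⟨(key k ih.1 ih.2).choose, (key k ih.1 ih.2).choose_spec.1⟩) n
  have hYd : ∀ n, dist x (Y n).1 = t n := fun n => (Y n).2.1
  have hYc : ∀ n, (Y n).1 ∈ connectedComponentIn ({x}ᶜ : Set M) u := fun n => (Y n).2.2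
  have hYstep : ∀ n, dist (Y n).1 (Y (n+1)).1 ≤ C * (1/2)^n := by
    intro n
    exact (key n (Y n).1 (Y n).2).choose_spec.2
  have hcauchy : CauchySeq (fun n => (Y n).1) :=
    cauchySeq_of_le_geometric (1/2) C (by norm_num) hYstep
  obtain ⟨y, hy⟩ := cauchySeq_tendsto_of_complete hcauchy
  have hdist_lim : Tendsto (fun n => dist x (Y n).1) atTop (nhds (dist x y)) :=
    tendsto_const_nhds.dist hy
  have htlim : Tendsto t atTop (nhds ℓ') := by
    have h2 : Tendsto (fun n : ℕ => ((1:ℝ)/2)^n) atTop (nhds 0) :=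
      tendsto_pow_atTop_nhds_zero_of_lt_one (by norm_num) (by norm_num)
    have := ((tendsto_const_nhds (x := ℓ' - d₀)).mul h2).const_sub ℓ'
    simpa [ht] using this
  have hxy : dist x y = ℓ' := by
    have : Tendsto (fun n => dist x (Y n).1) atTop (nhds ℓ') := by
      have : (fun n => dist x (Y n).1) = t := funext hYd
      rw [this]; exact htlim
    exact tendsto_nhds_unique hdist_lim this
  have hYy : ∀ n, dist (Y n).1 y ≤ C * (1/2)^n / (1 - 1/2) :=
    fun n => dist_le_of_le_geometric_of_tendsto (1/2) C (by norm_num) hYstep hy n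
  -- find n with the tail smaller than d₀
  have htail : Tendsto (fun n : ℕ => C * (1/2)^n / (1 - 1/2)) atTop (nhds 0) := by
    have h2 : Tendsto (fun n : ℕ => ((1:ℝ)/2)^n) atTop (nhds 0) :=
      tendsto_pow_atTop_nhds_zero_of_lt_one (by norm_num) (by norm_num)
    have := (h2.const_mul C).div_const (1 - 1/2)
    simpa using this
  obtain ⟨n, hn⟩ := (htail.eventually_lt_const hu0).exists
  have hlty : dist (Y n).1 y < d₀ := lt_of_le_of_lt (hYy n) hn
  have hylt : dist (Y n).1 y < dist x (Y n).1 := by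
    rw [hYd n]
    exact lt_of_lt_of_le hlty (htlb n)
  have hycomp : y ∈ connectedComponentIn ({x}ᶜ : Set M) (Y n).1 :=
    mem_comp_of_dist_lt hM hylt
  rw [← connectedComponentIn_eq (hYc n)] at hycomp
  exact ⟨y, hxy, hycomp⟩

theorem rtree_extend (hM : IsRTree M) (p : M) (r : ℝ)
    (hrb : RichlyBranchingAt p r) {a : M} {ℓ' : ℝ} (hpos : 0 < ℓ')
    (hle : ℓ' ≤ r - dist p a) {βs : Set M} (hβs : βs ∈ Branches a) :
    ∃ w, dist a w = ℓ' ∧ w ∈ βs := by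
  obtain ⟨x₀, hx₀⟩ := branch_nonempty hβs
  have hx₀a : x₀ ≠ a := by
    have := branch_subset hβs hx₀
    simpa using this
  have hdx₀ : 0 < dist a x₀ := dist_pos.2 (fun hh => hx₀a hh.symm)
  have hstep : ∃ u ∈ βs, 0 < dist a u ∧ dist a u < ℓ' := by
    by_cases hcase : dist a x₀ < ℓ'
    · exact ⟨x₀, hx₀, hdx₀, hcase⟩
    · push_neg at hcase
      obtain ⟨γ, hγc, hiso, hγ0, hγℓ, hs⟩ := exists_param hM a x₀
      have hmemIcc : ℓ'/2 ∈ Set.Icc (0:ℝ) (dist a x₀) :=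
        ⟨by linarith, by linarith⟩
      set u := γ (ℓ'/2) with hu
      have huseg : u ∈ seg hM a x₀ := by rw [hs]; exact ⟨ℓ'/2, hmemIcc, rfl⟩
      have hdu : dist a u = ℓ'/2 := by
        have := hiso 0 ⟨le_refl _, dist_nonneg⟩ (ℓ'/2) hmemIcc
        rw [hγ0] at this
        rw [this, abs_of_nonpos (by linarith)]; ring
      have hua : u ≠ a := by
        intro hh; rw [hh, dist_self] at hdu; linarith
      have humem : u ∈ βs := by
        have := seg_tail_mem_comp hM huseg hua hx₀a
        rwa [← branch_eq_comp hβs hx₀] at this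
      exact ⟨u, humem, by rw [hdu]; linarith, by rw [hdu]; linarith⟩
  obtain ⟨u, huβ, hu0, hult⟩ := hstep
  obtain ⟨y, hy1, hy2⟩ := rtree_core hM p r hrb hu0 hult hle
  refine ⟨y, hy1, ?_⟩
  rwa [← branch_eq_comp hβs huβ] at hy2

end Core
section Hull

variable {X : Type*} [MetricSpace X]

/-- The convex hull of a set in an ℝ-tree: union of segments between its points. -/
def hull (h : IsRTree X) (A : Set X) : Set X :=
  {x | ∃ a ∈ A, ∃ b ∈ A, x ∈ seg h a b}

theorem mem_hull_of_mem (h : IsRTree X) {A : Set X} {a : X} (ha : a ∈ A) :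
    a ∈ hull h A :=
  ⟨a, ha, a, ha, mem_seg_left h a a⟩

theorem seg_subset_hull (h : IsRTree X) {A : Set X} {a b : X} (ha : a ∈ A) (hb : b ∈ A) :
    seg h a b ⊆ hull h A :=
  fun _ hx => ⟨a, ha, b, hb, hx⟩

theorem hull_mono (h : IsRTree X) {A B : Set X} (hAB : A ⊆ B) : hull h A ⊆ hull h B := by
  rintro x ⟨a, ha, b, hb, hx⟩
  exact ⟨a, hAB ha, b, hAB hb, hx⟩

theorem hull_convex (h : IsRTree X) {A : Set X} {x y : X}
    (hx : x ∈ hull h A) (hy : y ∈ hull h A) : seg h x y ⊆ hull h A := by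
  obtain ⟨a, ha, b, hb, hxs⟩ := hx
  obtain ⟨a', ha', b', hb', hys⟩ := hy
  have h1 : seg h x y ⊆ seg h x a ∪ seg h a y := seg_subset_union h x y a
  have h2 : seg h a y ⊆ seg h a a' ∪ seg h a' y := seg_subset_union h a y a'
  have h3 : seg h x a ⊆ seg h a b := by
    rw [seg_comm]; exact seg_subset_left h hxs
  have h4 : seg h a' y ⊆ seg h a' b' := seg_subset_left h hys
  intro z hz
  rcases h1 hz with hz1 | hz1
  · exact ⟨a, ha, b, hb, h3 hz1⟩
  · rcases h2 hz1 with hz2 | hz2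
    · exact ⟨a, ha, a', ha', hz2⟩
    · exact ⟨a', ha', b', hb', h4 hz2⟩

theorem hull_eq_biUnion (h : IsRTree X) (A : Set X) :
    hull h A = ⋃ a ∈ A, ⋃ b ∈ A, seg h a b := by
  ext x
  simp only [hull, Set.mem_setOf_eq, Set.mem_iUnion]
  tauto

theorem isCompact_hull (h : IsRTree X) {A : Set X} (hA : A.Finite) :
    IsCompact (hull h A) := by
  rw [hull_eq_biUnion]
  exact hA.isCompact_biUnion (fun a _ => hA.isCompact_biUnion (fun b _ => isCompact_seg h a b))

theorem hull_insert_of_mem (h : IsRTree X) {A : Set X} {b : X} (hb : b ∈ hull h A) :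
    hull h (insert b A) = hull h A := by
  apply Set.Subset.antisymm
  · rintro x ⟨c₁, hc₁, c₂, hc₂, hx⟩
    have m₁ : c₁ ∈ hull h A := by
      rcases hc₁ with rfl | hc₁
      · exact hb
      · exact mem_hull_of_mem h hc₁
    have m₂ : c₂ ∈ hull h A := by
      rcases hc₂ with rfl | hc₂
      · exact hb
      · exact mem_hull_of_mem h hc₂
    exact hull_convex h m₁ m₂ hx
  · exact hull_mono h (Set.subset_insert _ _)

theorem exists_gate (h : IsRTree X) {T : Set X} (hTco : IsCompact T) (hTne : T.Nonempty)
    (hconv : ∀ x ∈ T, ∀ y ∈ T, seg h x y ⊆ T) (b : X) :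
    ∃ y ∈ T, ∀ z ∈ T, y ∈ seg h z b := by
  obtain ⟨y, hyT, hymin⟩ := hTco.exists_isMinOn hTne
    ((continuous_id.dist continuous_const).continuousOn :
      ContinuousOn (fun z => dist z b) T)
  refine ⟨y, hyT, fun z hz => ?_⟩
  obtain ⟨m, hm1, hm2, hm3⟩ := exists_median h z y b
  have hmT : m ∈ T := hconv z hz y hyT hm1
  have hmin : dist y b ≤ dist m b := hymin hmT
  have hadd := dist_add_of_mem_seg h hm3
  have hym : dist y m = 0 := by
    have : (0:ℝ) ≤ dist y m := dist_nonneg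
    linarith
  rw [dist_eq_zero] at hym
  rwa [hym]

end Hull

section Fresh

theorem exists_fresh_branch {M : Type*} [MetricSpace M] (κ : Cardinal)
    {a : M} (hbr : κ ≤ Cardinal.mk ↥(Branches a)) {F : Set (Set M)}
    (hF : Cardinal.mk ↥F < κ) : ∃ βs ∈ Branches a, βs ∉ F := by
  by_contra hcon
  push_neg at hcon
  have hsub : Branches a ⊆ F := fun β hβ => hcon β hβ
  have := Cardinal.mk_le_mk_of_subset hsub
  exact absurd (hbr.trans this) (not_le.2 hF)

end Fresh
section ExtendStep

theorem extend_step {M : Type u} [MetricSpace M] [CompleteSpace M] (hM : IsRTree M)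
    (p : M) (r : ℝ) (hrb : RichlyBranchingAt p r)
    (κ : Cardinal.{u}) (hκ : Cardinal.aleph0 ≤ κ)
    (hbr : ∀ a : M, dist p a < r → κ ≤ Cardinal.mk ↥(Branches a))
    {K : Type u} [MetricSpace K] (hK : IsRTree K)
    (q : K) (e : M) (he : ∀ x : K, dist q x ≤ r - dist p e)
    {ι : Type u} (hι : Cardinal.mk ι < κ)
    (β : ι → Set M) (hβ : ∀ i, β i ∈ Branches e)
    {C : Set K} (hCfin : C.Finite) (hqC : q ∈ C)
    {f : K → M}
    (hiso : ∀ x ∈ hull hK C, ∀ y ∈ hull hK C, dist (f x) (f y) = dist x y)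
    (hfq : f q = e)
    (havoid : ∀ i, ∀ x ∈ hull hK C, f x ∉ β i)
    (b : K) :
    ∃ f' : K → M,
      (∀ x ∈ hull hK (insert b C), ∀ y ∈ hull hK (insert b C),
        dist (f' x) (f' y) = dist x y) ∧
      f' q = e ∧ (∀ i, ∀ x ∈ hull hK (insert b C), f' x ∉ β i) := by
  classical
  have hqT : q ∈ hull hK C := mem_hull_of_mem hK hqC
  have hconv : ∀ x ∈ hull hK C, ∀ y ∈ hull hK C, seg hK x y ⊆ hull hK C :=
    fun x hx y hy => hull_convex hK hx hy
  obtain ⟨y, hyT, hgate⟩ := exists_gate hK (isCompact_hull hK hCfin) ⟨q, hqT⟩ hconv b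
  have hminz : ∀ z ∈ hull hK C, dist z y + dist y b = dist z b := fun z hz =>
    dist_add_of_mem_seg hK (hgate z hz)
  by_cases hlam0 : dist y b = 0
  · have hby : b = y := by rw [← dist_eq_zero, dist_comm]; exact hlam0
    have hbT : b ∈ hull hK C := hby ▸ hyT
    have hhull : hull hK (insert b C) = hull hK C := hull_insert_of_mem hK hbT
    exact ⟨f, by rw [hhull]; exact hiso, hfq, by rw [hhull]; exact havoid⟩
  have hlampos : 0 < dist y b := lt_of_le_of_ne dist_nonneg (Ne.symm hlam0)
  have hfinj : ∀ z ∈ hull hK C, f z = f y → z = y := by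
    intro z hz hfz
    have := hiso z hz y hyT
    rw [hfz, dist_self] at this
    exact dist_eq_zero.1 this.symm
  have hdq : dist q y + dist y b = dist q b := hminz q hqT
  have hdpfy : dist p (f y) + dist y b ≤ r := by
    have h1 : dist p (f y) ≤ dist p e + dist e (f y) := dist_triangle p e (f y)
    have h2 : dist e (f y) = dist q y := by
      rw [← hfq]; exact hiso q hqT y hyT
    have h3 := he b
    linarith
  have hfy_lt_r : dist p (f y) < r := by linarith
  set F : Set (Set M) :=
    ((fun c => connectedComponentIn ({f y}ᶜ : Set M) (f c)) '' C) ∪ Set.range β with hF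
  have hFcard : Cardinal.mk ↥F < κ := by
    apply lt_of_le_of_lt (Cardinal.mk_union_le _ _)
    apply Cardinal.add_lt_of_lt hκ
    · exact lt_of_lt_of_le (hCfin.image _).lt_aleph0 hκ
    · exact lt_of_le_of_lt Cardinal.mk_range_le hι
  obtain ⟨βs, hβsBr, hβsF⟩ := exists_fresh_branch κ (hbr (f y) hfy_lt_r) hFcard
  obtain ⟨w, hw1, hw2⟩ := rtree_extend hM p r hrb hlampos (by linarith) hβsBr
  obtain ⟨ρ, hρc, hρiso, hρ0, hρℓ, hρs⟩ := exists_param hM (f y) w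
  rw [hw1] at hρiso hρℓ hρs
  obtain ⟨δ, hδc, hδiso, hδ0, hδℓ, hδs⟩ := exists_param hK y b
  have hδd : ∀ t ∈ Set.Icc (0:ℝ) (dist y b), dist y (δ t) = t := by
    intro t ht
    have := hδiso 0 ⟨le_refl _, dist_nonneg⟩ t ht
    rw [hδ0] at this
    rw [this, abs_of_nonpos (by linarith [ht.1])]; ring
  have hρd : ∀ s ∈ Set.Icc (0:ℝ) (dist y b), dist (f y) (ρ s) = s := by
    intro s hs
    have := hρiso 0 ⟨le_refl _, dist_nonneg⟩ s hs
    rw [hρ0] at this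
    rw [this, abs_of_nonpos (by linarith [hs.1])]; ring
  have hmemd : ∀ x ∈ seg hK y b, dist y x ∈ Set.Icc (0:ℝ) (dist y b) := by
    intro x hx
    have := dist_add_of_mem_seg hK hx
    exact ⟨dist_nonneg, by linarith [dist_nonneg (x := x) (y := b)]⟩
  have hxδ : ∀ x ∈ seg hK y b, δ (dist y x) = x := by
    intro x hx
    rw [hδs] at hx
    obtain ⟨t, ht, rfl⟩ := hx
    rw [hδd t ht]
  have hTseg : ∀ z ∈ hull hK C, z ∈ seg hK y b → z = y := by
    intro z hz hzseg
    have h1 := hminz z hz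
    have h2 := dist_add_of_mem_seg hK hzseg
    have h0 : dist y z = 0 := by
      have hc : dist z y = dist y z := dist_comm z y
      have hnn : (0:ℝ) ≤ dist y z := dist_nonneg
      linarith
    exact (dist_eq_zero.1 h0).symm
  set f' : K → M := fun x => if x ∈ seg hK y b then ρ (dist y x) else f x with hf'
  have hf'T : ∀ x ∈ hull hK C, f' x = f x := by
    intro x hx
    by_cases hxs : x ∈ seg hK y b
    · have hxy := hTseg x hx hxs
      subst hxy
      simp only [hf', if_pos hxs, dist_self, hρ0]
    · simp only [hf', if_neg hxs]
  have hf'seg : ∀ x ∈ seg hK y b, f' x = ρ (dist y x) := by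
    intro x hx
    simp only [hf', if_pos hx]
  have hmixK : ∀ z ∈ hull hK C, ∀ x ∈ seg hK y b, dist z x = dist z y + dist y x := by
    intro z hz x hx
    have h1 := hminz z hz
    have h2 := dist_add_of_mem_seg hK hx
    have le1 : dist z x ≤ dist z y + dist y x := dist_triangle z y x
    have le2 : dist z b ≤ dist z x + dist x b := dist_triangle z x b
    linarith
  have hfznotβs : ∀ z ∈ hull hK C, f z ∉ βs := by
    intro z hz hmem
    by_cases hfz : f z = f y
    · rw [hfz] at hmem
      exact (branch_subset hβsBr hmem) rfl
    · have hzy : z ≠ y := fun hh => hfz (by rw [hh])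
      obtain ⟨c₁, hc₁, c₂, hc₂, hzs⟩ := hz
      have hzT : z ∈ hull hK C := ⟨c₁, hc₁, c₂, hc₂, hzs⟩
      have hcase : ∃ c ∈ C, y ∉ seg hK c z := by
        by_contra hcon
        push_neg at hcon
        have hy1 : y ∈ seg hK c₁ z := hcon c₁ hc₁
        have hy2 : y ∈ seg hK c₂ z := hcon c₂ hc₂
        have e1 := dist_add_of_mem_seg hK hy1
        have e2 := dist_add_of_mem_seg hK hy2
        have e3 := dist_add_of_mem_seg hK hzs
        have tri : dist c₁ c₂ ≤ dist c₁ y + dist y c₂ := dist_triangle c₁ y c₂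
        have hyc₂ : dist y c₂ = dist c₂ y := dist_comm y c₂
        have hzc₂ : dist z c₂ = dist c₂ z := dist_comm z c₂
        have hyz : dist y z = dist z y := dist_comm y z
        have hle : dist y z ≤ 0 := by linarith
        have h0 : dist y z = 0 := le_antisymm hle dist_nonneg
        exact hzy (dist_eq_zero.1 h0).symm
      obtain ⟨c, hcC, hyc⟩ := hcase
      have hcT : c ∈ hull hK C := mem_hull_of_mem hK hcC
      have hsegT : seg hK c z ⊆ hull hK C := hconv c hcT z hzT
      have hlip : LipschitzOnWith 1 f (hull hK C) := by
        intro u hu v hv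
        rw [edist_dist, edist_dist, hiso u hu v hv]
        simp
      have hfim : IsPreconnected (f '' seg hK c z) :=
        (isConnected_seg hK c z).isPreconnected.image f
          ((hlip.continuousOn).mono hsegT)
      have hfim_sub : f '' seg hK c z ⊆ ({f y}ᶜ : Set M) := by
        rintro _ ⟨z', hz', rfl⟩ hzy'
        simp only [Set.mem_singleton_iff] at hzy'
        have hz'T : z' ∈ hull hK C := hsegT hz'
        have := hfinj z' hz'T hzy'
        subst this
        exact hyc hz'
      have hfzc : f z ∈ connectedComponentIn ({f y}ᶜ : Set M) (f c) :=
        hfim.subset_connectedComponentIn ⟨c, mem_seg_left hK c z, rfl⟩ hfim_sub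
          ⟨z, mem_seg_right hK c z, rfl⟩
      have h1 : βs = connectedComponentIn ({f y}ᶜ : Set M) (f z) :=
        branch_eq_comp hβsBr hmem
      have h2 : connectedComponentIn ({f y}ᶜ : Set M) (f c) =
          connectedComponentIn ({f y}ᶜ : Set M) (f z) := connectedComponentIn_eq hfzc
      apply hβsF
      rw [h1, ← h2]
      exact Set.mem_union_left _ ⟨c, hcC, rfl⟩
  have hρβs : ∀ s : ℝ, 0 < s → s ∈ Set.Icc (0:ℝ) (dist y b) → ρ s ∈ βs := by
    intro s hs hsI
    have hρmem : ρ s ∈ seg hM (f y) w := by rw [hρs]; exact ⟨s, hsI, rfl⟩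
    have hρne : ρ s ≠ f y := by
      intro hh
      have := hρd s hsI
      rw [hh, dist_self] at this
      linarith
    have hwne : w ≠ f y := by
      intro hh
      rw [hh, dist_self] at hw1
      linarith
    have := seg_tail_mem_comp hM hρmem hρne hwne
    rwa [← branch_eq_comp hβsBr hw2] at this
  have hmixM : ∀ z ∈ hull hK C, ∀ s : ℝ, s ∈ Set.Icc (0:ℝ) (dist y b) →
      dist (f z) (ρ s) = dist z y + s := by
    intro z hz s hsI
    rcases eq_or_lt_of_le hsI.1 with hs0 | hs0
    · rw [← hs0, hρ0, hiso z hz y hyT]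
      ring
    · by_cases hfz : f z = f y
      · rw [hfz, hρd s hsI]
        have hzy0 : dist z y = 0 := by
          have := hiso z hz y hyT
          rw [hfz, dist_self] at this
          exact this.symm
        rw [hzy0]; ring
      · have hρmemβ : ρ s ∈ βs := hρβs s hs0 hsI
        have hρne : ρ s ≠ f y := by
          intro hh
          have := hρd s hsI
          rw [hh, dist_self] at this
          linarith
        have hnotcomp : ρ s ∉ connectedComponentIn ({f y}ᶜ : Set M) (f z) := by
          intro hmem
          have h1 : βs = connectedComponentIn ({f y}ᶜ : Set M) (ρ s) :=
            branch_eq_comp hβsBr hρmemβ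
          have h2 : connectedComponentIn ({f y}ᶜ : Set M) (f z) =
              connectedComponentIn ({f y}ᶜ : Set M) (ρ s) := connectedComponentIn_eq hmem
          have : f z ∈ βs := by
            rw [h1, ← h2]
            exact mem_connectedComponentIn (by simpa using hfz)
          exact hfznotβs z hz this
        obtain ⟨-, hadd⟩ := mem_seg_of_not_mem_comp hM hfz hρne hnotcomp
        rw [← hadd, hρd s hsI, hiso z hz y hyT]
  have hhull : hull hK (insert b C) = hull hK C ∪ seg hK y b := by
    apply Set.Subset.antisymm
    · rintro x ⟨c₁, hc₁, c₂, hc₂, hx⟩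
      have main : ∀ c ∈ C, x ∈ seg hK c b → x ∈ hull hK C ∪ seg hK y b := by
        intro c hc hx'
        have hy' : y ∈ seg hK c b := hgate c (mem_hull_of_mem hK hc)
        have hsplit := (mem_seg_of_dist_add hK (dist_add_of_mem_seg hK hy')).2
        rw [hsplit] at hx'
        rcases hx' with hx' | hx'
        · exact Or.inl (hconv c (mem_hull_of_mem hK hc) y hyT hx')
        · exact Or.inr hx'
      rcases hc₁ with h1 | h1 <;> rcases hc₂ with h2 | h2
      · rw [h1, h2, seg_self] at hx
        simp only [Set.mem_singleton_iff] at hx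
        exact Or.inr (by rw [hx]; exact mem_seg_right hK y b)
      · rw [h1, seg_comm] at hx
        exact main c₂ h2 hx
      · rw [h2] at hx
        exact main c₁ h1 hx
      · exact Or.inl ⟨c₁, h1, c₂, h2, hx⟩
    · intro x hx
      rcases hx with hx | hx
      · exact hull_mono hK (Set.subset_insert _ _) hx
      · have hyH : y ∈ hull hK (insert b C) := hull_mono hK (Set.subset_insert _ _) hyT
        have hbH : b ∈ hull hK (insert b C) := mem_hull_of_mem hK (Set.mem_insert _ _)
        exact hull_convex hK hyH hbH hx
  have hA : ∀ x ∈ hull hK C ∪ seg hK y b, ∀ x' ∈ seg hK y b,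
      dist (f' x) (f' x') = dist x x' := by
    intro x hx x' hx'
    have hs' := hmemd x' hx'
    rw [hf'seg x' hx']
    by_cases hxseg : x ∈ seg hK y b
    · rw [hf'seg x hxseg]
      have hsx := hmemd x hxseg
      have h3 := hδiso _ hsx _ hs'
      rw [hxδ x hxseg, hxδ x' hx'] at h3
      rw [hρiso _ hsx _ hs']
      exact h3.symm
    · have hxT : x ∈ hull hK C := by
        rcases hx with hx | hx
        · exact hx
        · exact absurd hx hxseg
      rw [hf'T x hxT, hmixM x hxT _ hs', hmixK x hxT x' hx']
  refine ⟨f', ?_, ?_, ?_⟩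
  · intro x hx x' hx'
    rw [hhull] at hx hx'
    by_cases hx's : x' ∈ seg hK y b
    · exact hA x hx x' hx's
    · have hx'T : x' ∈ hull hK C := by
        rcases hx' with hh | hh
        · exact hh
        · exact absurd hh hx's
      by_cases hxs : x ∈ seg hK y b
      · rw [dist_comm (f' x) (f' x'), dist_comm x x']
        exact hA x' (Or.inl hx'T) x hxs
      · have hxT : x ∈ hull hK C := by
          rcases hx with hh | hh
          · exact hh
          · exact absurd hh hxs
        rw [hf'T x hxT, hf'T x' hx'T]
        exact hiso x hxT x' hx'T
  · rw [hf'T q hqT, hfq]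
  · intro i x hx
    rw [hhull] at hx
    rcases hx with hxT | hxseg
    · rw [hf'T x hxT]; exact havoid i x hxT
    · rw [hf'seg x hxseg]
      have hsI := hmemd x hxseg
      rcases eq_or_lt_of_le hsI.1 with hs0 | hs0
      · rw [← hs0, hρ0]
        exact havoid i y hyT
      · have hρβ : ρ (dist y x) ∈ βs := hρβs _ hs0 hsI
        intro hmemβi
        by_cases hfye : f y = e
        · have hβi' : β i ∈ Branches (f y) := hfye ▸ hβ i
          have hne : βs ≠ β i := by
            intro hh; apply hβsF; rw [hh]
            exact Set.mem_union_right _ ⟨i, rfl⟩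
          exact Set.disjoint_left.1 (branch_disjoint hβsBr hβi' hne) hρβ hmemβi
        · have hfyβi : f y ∉ β i := havoid i y hyT
          have hsubc : β i ⊆ connectedComponentIn ({f y}ᶜ : Set M) e :=
            branch_subset_comp hM (hβ i) hfyβi hfye
          have hmemc : ρ (dist y x) ∈ connectedComponentIn ({f y}ᶜ : Set M) e :=
            hsubc hmemβi
          have h1 : βs = connectedComponentIn ({f y}ᶜ : Set M) (ρ (dist y x)) :=
            branch_eq_comp hβsBr hρβ
          have h2 : connectedComponentIn ({f y}ᶜ : Set M) e
              = connectedComponentIn ({f y}ᶜ : Set M) (ρ (dist y x)) :=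
            connectedComponentIn_eq hmemc
          apply hβsF
          rw [h1, ← h2, ← hfq]
          exact Set.mem_union_left _ ⟨q, hqC, rfl⟩

end ExtendStep
/-- Embedding lemma: in a complete richly branching pointed ℝ-tree
of radius `r` with at least `κ` branches at every interior point, any nonempty
finitely spanned ℝ-tree `K` with designated point `q` such that
`r − d(p,e) ≥ sup {d(q,x) : x ∈ K}` embeds isometrically with `q ↦ e`, avoiding any
prescribed collection of fewer than `κ` branches at `e`. -/
theorem statement_15 {M : Type u} [MetricSpace M] [CompleteSpace M]
    (r : ℝ) (hr : 0 < r) (hM : IsRTree M) (p : M)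
    (hrad : ∀ x : M, dist p x ≤ r)
    (hradEq : IsLUB (Set.range fun x : M => dist p x) r)
    (hrb : RichlyBranchingAt p r)
    (κ : Cardinal.{u}) (hκ : Cardinal.aleph0 ≤ κ)
    (hbr : ∀ a : M, dist p a < r → κ ≤ Cardinal.mk ↥(Branches a))
    (K : Type u) [MetricSpace K] [Nonempty K] (hK : IsRTree K)
    (hKfin : ∃ B : Set K, B.Finite ∧ Spans hK B)
    (q : K) (e : M)
    (he : ∀ x : K, dist q x ≤ r - dist p e)
    (ι : Type u) (hι : Cardinal.mk ι < κ)
    (β : ι → Set M) (hβ : ∀ i : ι, β i ∈ Branches e) :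
    ∃ f : K → M, (∀ x y : K, dist (f x) (f y) = dist x y) ∧ f q = e ∧
      ∀ i : ι, Disjoint (Set.range f) (β i) := by
  classical
  obtain ⟨B, hBfin, hBspan⟩ := hKfin
  have main : ∀ S : Set K, S.Finite → ∃ f : K → M,
      (∀ x ∈ hull hK (insert q S), ∀ y ∈ hull hK (insert q S),
        dist (f x) (f y) = dist x y) ∧
      f q = e ∧ ∀ i, ∀ x ∈ hull hK (insert q S), f x ∉ β i := by
    intro S hS
    refine Set.Finite.induction_on (motive := fun S _ => ∃ f : K → M,
      (∀ x ∈ hull hK (insert q S), ∀ y ∈ hull hK (insert q S),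
        dist (f x) (f y) = dist x y) ∧
      f q = e ∧ ∀ i, ∀ x ∈ hull hK (insert q S), f x ∉ β i) S hS ?_ ?_
    ·
      have hq : ∀ z ∈ hull hK (insert q (∅ : Set K)), z = q := by
        rintro z ⟨a, ha, b, hb, hz⟩
        simp only [Set.mem_insert_iff, Set.mem_empty_iff_false, or_false] at ha hb
        subst ha; subst hb
        rw [seg_self] at hz
        simpa using hz
      refine ⟨fun _ => e, ?_, rfl, ?_⟩
      · intro x hx y hy
        rw [hq x hx, hq y hy]
        simp
      · intro i x hx
        exact fun hmem => (branch_subset (hβ i) hmem) rfl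
    · intro b S' hbS' hS'fin ih
      obtain ⟨f, hiso, hfq, havoid⟩ := ih
      obtain ⟨f', h1, h2, h3⟩ := extend_step hM p r hrb κ hκ hbr hK q e he hι β hβ
        (hS'fin.insert q) (Set.mem_insert _ _) hiso hfq havoid b
      rw [Set.insert_comm]
      exact ⟨f', h1, h2, h3⟩
  obtain ⟨f, hiso, hfq, havoid⟩ := main B hBfin
  have huniv : ∀ x : K, x ∈ hull hK (insert q B) := by
    intro x
    obtain ⟨b₁, hb₁, b₂, hb₂, hx⟩ := hBspan x
    exact ⟨b₁, Set.mem_insert_of_mem _ hb₁, b₂, Set.mem_insert_of_mem _ hb₂, hx⟩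
  refine ⟨f, fun x y => hiso x (huniv x) y (huniv y), hfq, ?_⟩
  intro i
  rw [Set.disjoint_left]
  rintro _ ⟨x, rfl⟩ hmem
  exact havoid i x (huniv x) hmem
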